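/- Let a, b be fixed positive integers with ab = n > 1, and let ρ(a,b) denote the number of pairs (x, y) of integers with 1 < x < y such that xy divides ax + by − 1. Then for every real number α with 1 ≤ α ≤ √n, one has ρ(a,b) < (1/α)·√n·log(n) + 2·(1 + 0.6/α)·√n + (2n − 1)·α/(2√n − α). -/

import Mathlib

open Finset Real

section RhoAux

lemma rho_exp_small (t : ℝ) (ht : 2 ≤ t) : Real.exp (1/t) ≤ 1 + 2/(2*t - 1) := by
  have ht0 : (0:ℝ) < t := by linarith
  have h1 : (0:ℝ) ≤ 1/t := by positivity
  have h2 : 1/t ≤ 1 := by rw [div_le_one ht0]; linarith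
  have hb := Real.exp_bound' h1 h2 (n := 3) (by norm_num)
  have hsum : (∑ m ∈ Finset.range 3, (1/t) ^ m / m.factorial) = 1 + 1/t + (1/t)^2/2 := by
    simp [Finset.sum_range_succ, Nat.factorial]
  rw [hsum] at hb
  have key : 1 + 1/t + (1/t)^2/2 + (1/t)^3 * ((3:ℕ)+1)/((Nat.factorial 3 : ℕ) * (3:ℕ)) ≤ 1 + 2/(2*t-1) := by
    have hd : (0:ℝ) < 2*t - 1 := by linarith
    have expand : 1 + 2/(2*t-1) - (1 + 1/t + (1/t)^2/2 + (1/t)^3 * ((3:ℕ)+1)/((Nat.factorial 3:ℕ) * (3:ℕ))) = (t+4)/(18*t^3*(2*t-1)) := by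
      norm_num [Nat.factorial]
      field_simp
      ring
    nlinarith [div_nonneg (by linarith : (0:ℝ) ≤ t + 4) (by positivity : (0:ℝ) ≤ 18*t^3*(2*t-1))]
  exact hb.trans key

lemma rho_log_three_halves : (2/5 : ℝ) ≤ Real.log (3/2) := by
  have h5 : Real.exp 2 < 7.59375 := by
    have h := Real.exp_one_lt_d9
    have h2 : Real.exp 2 = Real.exp 1 * Real.exp 1 := by rw [← Real.exp_add]; norm_num
    nlinarith [Real.exp_pos 1]
  have h2 : (7.59375 : ℝ) = (3/2)^5 := by norm_num
  have h3 : Real.exp 2 < (3/2)^5 := by rw [← h2]; exact h5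
  have h4 : (2:ℝ) < 5 * Real.log (3/2) := by
    have := Real.log_lt_log (Real.exp_pos 2) h3
    rw [Real.log_exp, Real.log_pow] at this
    push_cast at this
    linarith
  linarith

lemma rho_harmonic_le : ∀ E : ℕ, 1 ≤ E →
    ∑ e ∈ Icc 1 E, ((e:ℝ))⁻¹ ≤ Real.log ((E:ℝ) + 1/2) + (1 - Real.log (3/2)) := by
  intro E
  induction E with
  | zero => intro h; omega
  | succ m ih =>
    intro _
    rcases Nat.eq_zero_or_pos m with hm | hm
    · subst hm; norm_num
    · have hstep : ∑ e ∈ Icc 1 (m+1), ((e:ℝ))⁻¹ = (∑ e ∈ Icc 1 m, ((e:ℝ))⁻¹) + ((m:ℝ)+1)⁻¹ := by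
        rw [← Finset.Ico_add_one_right_eq_Icc, Finset.sum_Ico_succ_top (by omega), Finset.Ico_add_one_right_eq_Icc]
        push_cast; ring
      have hm2 : (2:ℝ) ≤ (m:ℝ) + 1 := by
        have : (1:ℝ) ≤ (m:ℝ) := by exact_mod_cast hm
        linarith
      have hexp := rho_exp_small ((m:ℝ)+1) hm2
      have hlog : ((m:ℝ)+1)⁻¹ ≤ Real.log ((m:ℝ)+1+1/2) - Real.log ((m:ℝ)+1/2) := by
        have hpos : (0:ℝ) < (m:ℝ) + 1/2 := by linarith
        have h21 : (2*((m:ℝ)+1) - 1) ≠ 0 := by linarith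
        have hratio : ((m:ℝ)+1+1/2) / ((m:ℝ)+1/2) = 1 + 2/(2*((m:ℝ)+1) - 1) := by
          rw [show (2*((m:ℝ)+1) - 1) = 2*((m:ℝ)+1/2) by ring]
          field_simp
          ring
        have h1 : Real.exp (((m:ℝ)+1)⁻¹) ≤ ((m:ℝ)+1+1/2) / ((m:ℝ)+1/2) := by
          rw [hratio, ← one_div]; exact hexp
        have h2 := Real.log_le_log (by positivity) h1
        rw [Real.log_exp, Real.log_div (by linarith) (by linarith)] at h2
        linarith
      rw [hstep]
      have := ih hm
      push_cast
      linarith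

lemma rho_div_window (e K L : ℕ) (he : 0 < e) (hK : 0 < K) :
    (L + K)/e - L/e ≤ (K-1)/e + 1 := by
  by_cases h : e ∣ K
  · obtain ⟨t, rfl⟩ := h
    rcases Nat.eq_zero_or_pos t with rfl | ht
    · simp at hK
    obtain ⟨u, rfl⟩ := Nat.exists_eq_add_of_lt ht
    have h1 : (L + e*(0+u+1))/e = L/e + (0+u+1) := by
      rw [Nat.add_mul_div_left _ _ he]
    have heq : e*(0+u+1) - 1 = e*u + (e-1) := by
      have h7 : e*(0+u+1) = e*u + e := by ring
      omega
    have h2 : (e*(0+u+1) - 1)/e = u := by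
      rw [heq, Nat.mul_add_div he, Nat.div_eq_of_lt (by omega)]
      omega
    omega
  · have hne : K % e ≠ 0 := fun hc => h (Nat.dvd_of_mod_eq_zero hc)
    have h1 : (L + K)/e ≤ L/e + K/e + 1 := by
      rw [Nat.add_div he]
      split <;> omega
    have h2 : K/e ≤ (K-1)/e := by
      apply (Nat.le_div_iff_mul_le he).2
      have h5 : K = e * (K/e) + K % e := (Nat.div_add_mod K e).symm
      have h6 : K/e * e = e * (K/e) := Nat.mul_comm _ _
      have h4 := Nat.mod_lt K he
      omega
    have h3 : (L + K)/e - L/e ≤ K/e + 1 :=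
      Nat.sub_le_of_le_add (by linarith)
    exact h3.trans (Nat.add_le_add_right h2 1)

lemma rho_lemA (a b n x y k c c' : ℤ) (ha : 1 ≤ a) (hb : 1 ≤ b) (hab : a*b = n)
    (hx : 2 ≤ x) (hxy : x < y) (hk : 1 ≤ k) (hc : 1 ≤ c) (hc' : 1 ≤ c')
    (h1 : y*c + 1 = a*x) (h2 : x*c' + 1 = b*y)
    (hkx : k*x = b + c) (hky : k*y = a + c') : 2*(k*y) + 1 ≤ 2*n + y := by
  by_cases hya : y ≤ 2*a
  · nlinarith [mul_nonneg (by linarith : (0:ℤ) ≤ b - 1) (by linarith : (0:ℤ) ≤ 2*a - y),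
      mul_nonneg (by linarith : (0:ℤ) ≤ x - 2) (by linarith : (0:ℤ) ≤ c')]
  · push_neg at hya
    have h2c : 2*c < x := by
      by_contra hcon
      push_neg at hcon
      have p1 : x*y ≤ 2*c*y := mul_le_mul_of_nonneg_right hcon (by linarith)
      have p2 : x*(2*a+1) ≤ x*y := mul_le_mul_of_nonneg_left (by linarith) (by linarith)
      nlinarith [p1, p2, h1]
    have hxk : x*(2*k-1) ≤ 2*b - 1 := by nlinarith [hkx, h2c]
    have hyle : y ≤ a*x - 1 := by
      nlinarith [mul_nonneg (by linarith : (0:ℤ) ≤ y) (by linarith : (0:ℤ) ≤ c - 1), h1]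
    have hB : a*(x*(2*k-1)) ≤ a*(2*b-1) := mul_le_mul_of_nonneg_left hxk (by linarith)
    have hC : y*(2*k-1) ≤ (a*x-1)*(2*k-1) := mul_le_mul_of_nonneg_right hyle (by linarith)
    nlinarith [hB, hC]

lemma rho_struct {a b n x y : ℕ} (ha : 0 < a) (hb : 0 < b) (hab : a * b = n)
    (hx : 1 < x) (hxy : x < y) (hdvd : x * y ∣ a * x + b * y - 1) :
    ∃ k c c' : ℕ, 0 < k ∧ 0 < c ∧ 0 < c' ∧ (a * x + b * y - 1) / (x * y) = k ∧
      k * x = b + c ∧ k * y = a + c' ∧ c * c' + k = n ∧ y * c + 1 = a * x ∧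
      x * c' + 1 = b * y ∧ 2 * (k * y) + 1 ≤ 2 * n + y := by
  have hx2 : 2 ≤ x := hx
  have hy3 : 3 ≤ y := by omega
  have hax : 2 ≤ a * x := by calc 2 = 1 * 2 := by norm_num
                                 _ ≤ a * x := Nat.mul_le_mul ha hx2
  have hby : 3 ≤ b * y := by calc 3 = 1 * 3 := by norm_num
                                 _ ≤ b * y := Nat.mul_le_mul hb hy3
  obtain ⟨k, hk⟩ := hdvd
  have hk' : a * x + b * y - 1 = k * (x * y) := by rw [hk]; ring
  have hkey : k * (x * y) + 1 = a * x + b * y := by omega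
  have hxy0 : 0 < x * y := by positivity
  have hk1 : 0 < k := by
    rcases Nat.eq_zero_or_pos k with rfl | h
    · simp at hkey; omega
    · exact h
  have hdiv : (a * x + b * y - 1) / (x * y) = k := by
    rw [hk', Nat.mul_div_left _ hxy0]
  have hbkx : b < k * x := by
    by_contra hcon
    push_neg at hcon
    have h5 : k * x * y ≤ b * y := Nat.mul_le_mul_right y hcon
    have h6 : k * x * y = k * (x * y) := by ring
    omega
  obtain ⟨c, hc⟩ : ∃ c, k * x = b + c := ⟨k * x - b, by omega⟩
  have hc0 : 0 < c := by omega
  have hyc : y * c + 1 = a * x := by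
    have h1 : k * x * y = (b + c) * y := by rw [hc]
    have h2 : (b + c) * y = b * y + y * c := by ring
    have h6 : k * x * y = k * (x * y) := by ring
    omega
  have haky : a < k * y := by
    by_contra hcon
    push_neg at hcon
    have h5 : k * y * x ≤ a * x := Nat.mul_le_mul_right x hcon
    have h6 : k * y * x = k * (x * y) := by ring
    omega
  obtain ⟨c', hc'⟩ : ∃ c', k * y = a + c' := ⟨k * y - a, by omega⟩
  have hc'0 : 0 < c' := by omega
  have hxc' : x * c' + 1 = b * y := by
    have h1 : k * y * x = (a + c') * x := by rw [hc']
    have h2 : (a + c') * x = a * x + x * c' := by ring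
    have h6 : k * y * x = k * (x * y) := by ring
    omega
  have hprod : c * c' + k = n := by
    have hmul : (c * c' + k) * (x * y) = n * (x * y) := by
      zify
      have z1 : (y:ℤ) * c + 1 = a * x := by exact_mod_cast hyc
      have z2 : (x:ℤ) * c' + 1 = b * y := by exact_mod_cast hxc'
      have z3 : (k:ℤ) * (x * y) + 1 = a * x + b * y := by exact_mod_cast hkey
      have z4 : (a:ℤ) * b = n := by exact_mod_cast hab
      linear_combination (c' * x : ℤ) * z1 + ((a:ℤ) * x - 1) * z2 + z3 + (x:ℤ)*(y:ℤ)*z4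
    exact Nat.eq_of_mul_eq_mul_right hxy0 hmul
  have hA : 2 * (k * y) + 1 ≤ 2 * n + y := by
    have := rho_lemA a b n x y k c c'
      (by exact_mod_cast ha) (by exact_mod_cast hb) (by exact_mod_cast hab)
      (by exact_mod_cast hx2) (by exact_mod_cast hxy) (by exact_mod_cast hk1)
      (by exact_mod_cast hc0) (by exact_mod_cast hc'0)
      (by exact_mod_cast hyc) (by exact_mod_cast hxc')
      (by exact_mod_cast hc) (by exact_mod_cast hc')
    exact_mod_cast this
  exact ⟨k, c, c', hk1, hc0, hc'0, hdiv, hc, hc', hprod, hyc, hxc', hA⟩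

lemma rho_same_y {a y x1 x2 c1 c2 : ℕ} (hx1 : x1 < y) (hx2 : x2 < y)
    (h1 : y * c1 + 1 = a * x1) (h2 : y * c2 + 1 = a * x2) : x1 = x2 := by
  have z1 : (y:ℤ) * c1 + 1 = a * x1 := by exact_mod_cast h1
  have z2 : (y:ℤ) * c2 + 1 = a * x2 := by exact_mod_cast h2
  have hcop : IsCoprime (y:ℤ) (a:ℤ) := ⟨-(c1:ℤ), (x1:ℤ), by linarith⟩
  have hdvd : (y:ℤ) ∣ a * ((x1:ℤ) - x2) := ⟨(c1:ℤ) - c2, by ring_nf; linarith⟩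
  have hdvd2 : (y:ℤ) ∣ ((x1:ℤ) - x2) := (IsCoprime.dvd_of_dvd_mul_left hcop hdvd)
  have hz : ((x1:ℤ) - x2) = 0 := Int.eq_zero_of_abs_lt_dvd hdvd2 (by
    rw [abs_lt]
    constructor <;> [skip; skip] <;> omega)
  have : (x1:ℤ) = x2 := by linarith
  exact_mod_cast this

end RhoAux

set_option maxHeartbeats 1000000 in
/-- Theorem 1: For fixed positive integers `a, b` with `ab = n > 1`,
the number `ρ(a,b)` of pairs `(x, y)` of integers with `1 < x < y` and
`xy ∣ ax + by - 1` satisfies, for every real `1 ≤ α ≤ √n`,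
`ρ(a,b) < (1/α)·√n·log n + 2·(1 + 0.6/α)·√n + (2n-1)·α/(2√n - α)`. -/
theorem rho_bound (n a b : ℕ) (ha : 0 < a) (hb : 0 < b) (hab : a * b = n)
    (hn : 1 < n) (α : ℝ) (hα1 : 1 ≤ α) (hα2 : α ≤ Real.sqrt n) :
    (Nat.card {p : ℕ × ℕ | 1 < p.1 ∧ p.1 < p.2 ∧ p.1 * p.2 ∣ a * p.1 + b * p.2 - 1} : ℝ) <
      (1 / α) * Real.sqrt n * Real.log n + 2 * (1 + 0.6 / α) * Real.sqrt n +
        (2 * (n : ℝ) - 1) * α / (2 * Real.sqrt n - α) := by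
  classical
  set s : ℝ := Real.sqrt n with hs
  have hn2 : (2:ℕ) ≤ n := hn
  have hnR : (2:ℝ) ≤ (n:ℝ) := by exact_mod_cast hn2
  have hα0 : (0:ℝ) < α := by linarith
  have hs0 : (0:ℝ) ≤ s := Real.sqrt_nonneg _
  have hs2 : s * s = (n:ℝ) := Real.mul_self_sqrt (by linarith)
  have hs1 : (1:ℝ) < s := by
    rw [hs, show (1:ℝ) = Real.sqrt 1 by simp]
    exact Real.sqrt_lt_sqrt (by norm_num) (by linarith)
  have hsn : s < (n:ℝ) := by nlinarith
  have hsα : (1:ℝ) ≤ s / α := (one_le_div hα0).2 hα2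
  set K : ℕ := ⌊s / α⌋₊ with hKdef
  have hK1 : 1 ≤ K := Nat.le_floor (by exact_mod_cast hsα)
  have hKle : (K:ℝ) ≤ s / α := Nat.floor_le (by positivity)
  have hKles : (K:ℝ) ≤ s := hKle.trans (by
    rw [div_le_iff₀ hα0]; nlinarith)
  have hKn : K ≤ n - 1 := by
    have h1 : (K:ℝ) < (n:ℝ) := lt_of_le_of_lt hKles hsn
    have h2 : K < n := by exact_mod_cast h1
    omega
  set E : ℕ := Nat.sqrt (n-1) with hEdef
  have hE1 : 1 ≤ E := by
    rw [hEdef]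
    exact Nat.sqrt_pos.2 (by omega)
  have hEsq : (E:ℝ) * E ≤ (n:ℝ) - 1 := by
    have h := Nat.sqrt_le (n-1)
    rw [← hEdef] at h
    have h2 : ((E*E:ℕ):ℝ) ≤ ((n-1:ℕ):ℝ) := by exact_mod_cast h
    rw [Nat.cast_sub (by omega)] at h2
    push_cast at h2
    linarith
  have hEs : (E:ℝ) < s := by nlinarith [Nat.cast_nonneg (α := ℝ) E]
  -- the finite solution set
  set T : Finset (ℕ × ℕ) := (Finset.range (2*n) ×ˢ Finset.range (2*n)).filter
    (fun p => 1 < p.1 ∧ p.1 < p.2 ∧ p.1 * p.2 ∣ a * p.1 + b * p.2 - 1) with hTdef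
  have hybound : ∀ p : ℕ × ℕ, (1 < p.1 ∧ p.1 < p.2 ∧ p.1 * p.2 ∣ a * p.1 + b * p.2 - 1) →
      p.2 ≤ 2*n - 1 := by
    intro p hp
    obtain ⟨h1, h2, h3⟩ := hp
    obtain ⟨k, c, c', hk0, hc0, hc'0, hkdiv, hkx, hky, hprod, hyc, hxc', hA⟩ :=
      rho_struct ha hb hab h1 h2 h3
    have h4 : p.2 ≤ k * p.2 := Nat.le_mul_of_pos_left p.2 hk0
    omega
  have hsetT : {p : ℕ × ℕ | 1 < p.1 ∧ p.1 < p.2 ∧ p.1 * p.2 ∣ a * p.1 + b * p.2 - 1} = ↑T := by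
    ext p
    simp only [hTdef, Finset.coe_filter, Finset.mem_product, Finset.mem_range,
      Set.mem_setOf_eq]
    constructor
    · intro hp
      have hy := hybound p hp
      have hxy := hp.2.1
      exact ⟨⟨by omega, by omega⟩, hp⟩
    · exact fun hp => hp.2
  have hcard : (Nat.card {p : ℕ × ℕ | 1 < p.1 ∧ p.1 < p.2 ∧ p.1 * p.2 ∣ a * p.1 + b * p.2 - 1})
      = T.card := by
    rw [hsetT, Nat.card_coe_set_eq, Set.ncard_coe_finset]
  rw [hcard]
  -- split by the multiplier k
  set kOf : ℕ × ℕ → ℕ := fun p => (a * p.1 + b * p.2 - 1) / (p.1 * p.2) with hkOf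
  set T1 : Finset (ℕ × ℕ) := T.filter (fun p => kOf p ≤ K) with hT1def
  set T2 : Finset (ℕ × ℕ) := T.filter (fun p => ¬ (kOf p ≤ K)) with hT2def
  have hsplit : T1.card + T2.card = T.card := Finset.card_filter_add_card_filter_not _
  have hmemT : ∀ p ∈ T, 1 < p.1 ∧ p.1 < p.2 ∧ p.1 * p.2 ∣ a * p.1 + b * p.2 - 1 := by
    intro p hp
    rw [hTdef] at hp
    exact (Finset.mem_filter.1 hp).2
  -- T2 bound
  set M : ℕ := (2*n - 1) / (2*K + 1) with hMdef
  have hT2card : T2.card ≤ M := by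
    have hmaps : ∀ p ∈ T2, p.2 ∈ Finset.Icc 3 M := by
      intro p hp
      rw [hT2def] at hp
      obtain ⟨hpT, hpk⟩ := Finset.mem_filter.1 hp
      obtain ⟨h1, h2, h3⟩ := hmemT p hpT
      obtain ⟨k, c, c', hk0, hc0, hc'0, hkdiv, hkx, hky, hprod, hyc, hxc', hA⟩ :=
        rho_struct ha hb hab h1 h2 h3
      have hkeq : kOf p = k := by rw [hkOf]; exact hkdiv
      have hkK : K + 1 ≤ k := by omega
      have hmono : p.2 * (2*K + 1) ≤ p.2 * (2*k - 1) :=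
        Nat.mul_le_mul_left _ (by omega)
      have heq : p.2 * (2*k - 1) + p.2 = p.2 * (2*k) := by
        have h5 : (2*k - 1) + 1 = 2*k := by omega
        calc p.2 * (2*k-1) + p.2 = p.2 * ((2*k-1) + 1) := by ring
          _ = p.2 * (2*k) := by rw [h5]
      have hyk : p.2 * (2*k) = 2 * (k * p.2) := by ring
      have hle : p.2 * (2*K+1) ≤ 2*n - 1 := by omega
      have hyM : p.2 ≤ M := by
        rw [hMdef]
        exact Nat.le_div_iff_mul_le (by omega) |>.2 hle
      simp only [Finset.mem_Icc]
      omega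
    have hinj : Set.InjOn Prod.snd (↑T2 : Set (ℕ × ℕ)) := by
      intro p hp q hq hpq
      rw [hT2def] at hp hq
      simp only [Finset.coe_filter, Set.mem_setOf_eq] at hp hq
      obtain ⟨hp1, hp2, hp3⟩ := hmemT p hp.1
      obtain ⟨hq1, hq2, hq3⟩ := hmemT q hq.1
      obtain ⟨kp, cp, cp', _, _, _, _, _, _, _, hycp, _, _⟩ :=
        rho_struct ha hb hab hp1 hp2 hp3
      obtain ⟨kq, cq, cq', _, _, _, _, _, _, _, hycq, _, _⟩ :=
        rho_struct ha hb hab hq1 hq2 hq3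
      have hy : p.2 = q.2 := hpq
      have hx : p.1 = q.1 := by
        apply rho_same_y hp2 (hy ▸ hq2) hycp
        rw [hy]
        exact hycq
      exact Prod.ext hx hy
    calc T2.card ≤ (Finset.Icc 3 M).card := Finset.card_le_card_of_injOn Prod.snd hmaps hinj
      _ = M + 1 - 3 := Nat.card_Icc 3 M
      _ ≤ M := by
          have h8 : M + 1 - 3 ≤ M + 1 - 1 := Nat.sub_le_sub_left (by norm_num) (M+1)
          simpa using h8
  -- T1 bound via divisor pairs
  set F : Finset (ℕ × ℕ) := (Finset.Icc 1 E ×ˢ Finset.Icc 1 K).filter (fun q => q.1 ∣ n - q.2)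
    with hFdef
  have hT1card : T1.card ≤ 2 * F.card := by
    have hmaps : ∀ p ∈ T1,
        ((min (kOf p * p.1 - b) (kOf p * p.2 - a), kOf p),
          decide (kOf p * p.1 - b ≤ kOf p * p.2 - a))
          ∈ F ×ˢ (Finset.univ : Finset Bool) := by
      intro p hp
      rw [hT1def] at hp
      obtain ⟨hpT, hpk⟩ := Finset.mem_filter.1 hp
      obtain ⟨h1, h2, h3⟩ := hmemT p hpT
      obtain ⟨k, c, c', hk0, hc0, hc'0, hkdiv, hkx, hky, hprod, hyc, hxc', hA⟩ :=
        rho_struct ha hb hab h1 h2 h3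
      have hkeq : kOf p = k := by rw [hkOf]; exact hkdiv
      rw [hkeq]
      have hceq : k * p.1 - b = c := by omega
      have hc'eq : k * p.2 - a = c' := by omega
      rw [hceq, hc'eq]
      simp only [Finset.mem_product, Finset.mem_univ, and_true, hFdef, Finset.mem_filter,
        Finset.mem_Icc]
      have hkK : k ≤ K := by omega
      have hmin1 : 1 ≤ min c c' := by omega
      have hminE : min c c' ≤ E := by
        rw [hEdef]
        apply Nat.le_sqrt.2
        have hm1 : min c c' ≤ c := min_le_left _ _
        have hm2 : min c c' ≤ c' := min_le_right _ _
        have h6 : min c c' * min c c' ≤ c * c' := Nat.mul_le_mul hm1 hm2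
        omega
      have hdvd : min c c' ∣ n - k := by
        have h7 : n - k = c * c' := by omega
        rw [h7]
        rcases le_total c c' with hcc | hcc
        · rw [min_eq_left hcc]; exact Dvd.intro c' rfl
        · rw [min_eq_right hcc]; exact Dvd.intro_left c rfl
      exact ⟨⟨⟨hmin1, hminE⟩, ⟨by omega, hkK⟩⟩, hdvd⟩
    have hinj : Set.InjOn (fun p : ℕ × ℕ => ((min (kOf p * p.1 - b) (kOf p * p.2 - a), kOf p),
        decide (kOf p * p.1 - b ≤ kOf p * p.2 - a))) (↑T1 : Set (ℕ × ℕ)) := by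
      intro p hp q hq hpq
      rw [hT1def] at hp hq
      simp only [Finset.coe_filter, Set.mem_setOf_eq] at hp hq
      obtain ⟨hp1, hp2, hp3⟩ := hmemT p hp.1
      obtain ⟨hq1, hq2, hq3⟩ := hmemT q hq.1
      obtain ⟨kp, cp, cp', hkp0, hcp0, hcp'0, hkdivp, hkxp, hkyp, hprodp, hycp, hxcp', hAp⟩ :=
        rho_struct ha hb hab hp1 hp2 hp3
      obtain ⟨kq, cq, cq', hkq0, hcq0, hcq'0, hkdivq, hkxq, hkyq, hprodq, hycq, hxcq', hAq⟩ :=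
        rho_struct ha hb hab hq1 hq2 hq3
      have hkeqp : kOf p = kp := by rw [hkOf]; exact hkdivp
      have hkeqq : kOf q = kq := by rw [hkOf]; exact hkdivq
      simp only [Prod.mk.injEq] at hpq
      rw [hkeqp, hkeqq] at hpq
      obtain ⟨⟨hmin, hkk⟩, hbit⟩ := hpq
      have hcp : kp * p.1 - b = cp := by omega
      have hcq : kq * q.1 - b = cq := by omega
      have hcp' : kp * p.2 - a = cp' := by omega
      have hcq' : kq * q.2 - a = cq' := by omega
      rw [hcp, hcp', hcq, hcq'] at hmin hbit
      have hiff : (cp ≤ cp') ↔ (cq ≤ cq') := decide_eq_decide.mp hbit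
      have hcc : cp = cq ∧ cp' = cq' := by
        by_cases hle : cp ≤ cp'
        · have hleq : cq ≤ cq' := hiff.1 hle
          rw [min_eq_left hle, min_eq_left hleq] at hmin
          refine ⟨hmin, ?_⟩
          rw [← hmin] at hprodq
          have h9 : cp * cp' = cp * cq' := by omega
          exact Nat.eq_of_mul_eq_mul_left hcp0 h9
        · have hleq : ¬ (cq ≤ cq') := fun hcon => hle (hiff.2 hcon)
          push_neg at hle hleq
          rw [min_eq_right hle.le, min_eq_right hleq.le] at hmin
          rw [← hmin] at hprodq
          have h9 : cp' * cp = cp' * cq := by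
            have e1 : cp * cp' = cp' * cp := Nat.mul_comm _ _
            have e2 : cq * cp' = cp' * cq := Nat.mul_comm _ _
            omega
          exact ⟨Nat.eq_of_mul_eq_mul_left hcp'0 h9, hmin⟩
      have hx : p.1 = q.1 := by
        apply Nat.eq_of_mul_eq_mul_left hkp0
        rw [hkxp, hkk, hkxq, hcc.1]
      have hy : p.2 = q.2 := by
        apply Nat.eq_of_mul_eq_mul_left hkp0
        rw [hkyp, hkk, hkyq, hcc.2]
      exact Prod.ext hx hy
    calc T1.card ≤ (F ×ˢ (Finset.univ : Finset Bool)).card :=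
          Finset.card_le_card_of_injOn _ hmaps hinj
      _ = F.card * 2 := by
          rw [Finset.card_product]
          simp
      _ = 2 * F.card := Nat.mul_comm _ _
  -- bound F.card
  have hFcard : F.card ≤ ∑ e ∈ Finset.Icc 1 E, ((K-1)/e + 1) := by
    have hfib : F.card = ∑ e ∈ Finset.Icc 1 E, (F.filter (fun q => q.1 = e)).card := by
      apply Finset.card_eq_sum_card_fiberwise
      intro q hq
      rw [hFdef] at hq
      exact (Finset.mem_product.1 (Finset.mem_filter.1 hq).1).1
    rw [hfib]
    apply Finset.sum_le_sum
    intro e he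
    have he1 : 1 ≤ e := (Finset.mem_Icc.1 he).1
    have hstep1 : ((F.filter (fun q => q.1 = e)).card : ℕ) ≤
        ((Finset.Ioc (n-1-K) (n-1)).filter (fun m => e ∣ m)).card := by
      apply Finset.card_le_card_of_injOn (fun q => n - q.2)
      · intro q hq
        simp only [Finset.mem_coe, hFdef, Finset.mem_filter, Finset.mem_product, Finset.mem_Icc] at hq
        obtain ⟨⟨⟨he2, hE2⟩, hK2⟩, hdvd2⟩ := hq.1
        simp only [Finset.mem_coe, Finset.mem_filter, Finset.mem_Ioc]
        refine ⟨⟨by omega, by omega⟩, ?_⟩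
        rw [← hq.2]
        exact hdvd2
      · intro q hq r hr hqr
        simp only [Finset.coe_filter, Set.mem_setOf_eq, hFdef, Finset.mem_filter,
          Finset.mem_product, Finset.mem_Icc] at hq hr
        have h2 : q.2 = r.2 := by
          have hq2 : q.2 ≤ K := hq.1.1.2.2
          have hr2 : r.2 ≤ K := hr.1.1.2.2
          simp only at hqr
          omega
        have h1 : q.1 = r.1 := by rw [hq.2, hr.2]
        exact Prod.ext h1 h2
    have hLR : n-1-K ≤ n-1 := by omega
    have hdisj : Disjoint (Finset.Ioc 0 (n-1-K)) (Finset.Ioc (n-1-K) (n-1)) := by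
      rw [Finset.disjoint_left]
      intro m hm1 hm2
      simp only [Finset.mem_Ioc] at hm1 hm2
      omega
    have hunion : Finset.Ioc 0 (n-1-K) ∪ Finset.Ioc (n-1-K) (n-1) = Finset.Ioc 0 (n-1) :=
      Finset.Ioc_union_Ioc_eq_Ioc (Nat.zero_le _) hLR
    have hcards : ((Finset.Ioc 0 (n-1-K)).filter (fun m => e ∣ m)).card
        + ((Finset.Ioc (n-1-K) (n-1)).filter (fun m => e ∣ m)).card
        = ((Finset.Ioc 0 (n-1)).filter (fun m => e ∣ m)).card := by
      rw [← hunion, Finset.filter_union]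
      exact (Finset.card_union_of_disjoint (Finset.disjoint_filter_filter hdisj)).symm
    have hv1 : ((Finset.Ioc 0 (n-1-K)).filter (fun m => e ∣ m)).card = (n-1-K)/e :=
      Nat.Ioc_filter_dvd_card_eq_div _ _
    have hv2 : ((Finset.Ioc 0 (n-1)).filter (fun m => e ∣ m)).card = (n-1)/e :=
      Nat.Ioc_filter_dvd_card_eq_div _ _
    have hwin : (n-1)/e - (n-1-K)/e ≤ (K-1)/e + 1 := by
      have hrw : n-1 = (n-1-K) + K := by omega
      calc (n-1)/e - (n-1-K)/e = ((n-1-K) + K)/e - (n-1-K)/e := by rw [← hrw]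
        _ ≤ (K-1)/e + 1 := rho_div_window e K (n-1-K) (by omega) (by omega)
    omega
  -- harmonic sum
  set H : ℝ := ∑ e ∈ Finset.Icc 1 E, ((e:ℝ))⁻¹ with hHdef
  have hH1 : (1:ℝ) ≤ H := by
    rw [hHdef]
    have h1mem : 1 ∈ Finset.Icc 1 E := Finset.mem_Icc.2 ⟨le_refl 1, hE1⟩
    have h2 := Finset.single_le_sum (f := fun e : ℕ => ((e:ℝ))⁻¹)
      (fun i _ => by positivity) h1mem
    simpa using h2
  have hH0 : (0:ℝ) ≤ H := by linarith
  have hsumR : ((∑ e ∈ Finset.Icc 1 E, ((K-1)/e + 1) : ℕ) : ℝ) ≤ ((K:ℝ)-1) * H + E := by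
    push_cast
    have hterm : ∀ e ∈ Finset.Icc 1 E, (((K-1)/e : ℕ) : ℝ) + 1 ≤ ((K:ℝ)-1) * ((e:ℝ))⁻¹ + 1 := by
      intro e he
      have h1 : (((K-1)/e : ℕ) : ℝ) ≤ ((K-1 : ℕ) : ℝ) / (e:ℝ) := Nat.cast_div_le
      have h2 : ((K-1 : ℕ) : ℝ) = (K:ℝ) - 1 := by
        rw [Nat.cast_sub hK1]; norm_num
      rw [h2, div_eq_mul_inv] at h1
      linarith
    calc (∑ e ∈ Finset.Icc 1 E, ((((K-1)/e : ℕ):ℝ) + 1))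
        ≤ ∑ e ∈ Finset.Icc 1 E, (((K:ℝ)-1) * ((e:ℝ))⁻¹ + 1) := Finset.sum_le_sum hterm
      _ = ((K:ℝ)-1) * H + E := by
          rw [Finset.sum_add_distrib, ← Finset.mul_sum, ← hHdef]
          simp [Nat.card_Icc]
  have hT1R : (T1.card : ℝ) ≤ 2 * (((K:ℝ)-1) * H + (E:ℝ)) := by
    have h1 : T1.card ≤ 2 * (∑ e ∈ Finset.Icc 1 E, ((K-1)/e + 1)) :=
      hT1card.trans (Nat.mul_le_mul_left 2 hFcard)
    have h2 : (T1.card : ℝ) ≤ 2 * ((∑ e ∈ Finset.Icc 1 E, ((K-1)/e + 1) : ℕ) : ℝ) := by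
      exact_mod_cast h1
    linarith
  -- real bound on T2
  have hT2R : (T2.card : ℝ) ≤ (2*(n:ℝ) - 1) * α / (2*s - α) := by
    have hden : (0:ℝ) < 2*s - α := by linarith
    have hMK : (M:ℝ) * (2*(K:ℝ)+1) ≤ 2*(n:ℝ) - 1 := by
      have h1 : M * (2*K+1) ≤ 2*n - 1 := Nat.div_mul_le_self _ _
      have h2 : ((M * (2*K+1) : ℕ) : ℝ) ≤ ((2*n-1 : ℕ) : ℝ) := by exact_mod_cast h1
      have h3 : ((2*n-1 : ℕ) : ℝ) = 2*(n:ℝ) - 1 := by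
        rw [Nat.cast_sub (by omega)]; push_cast; ring
      rw [h3] at h2
      push_cast at h2
      linarith
    have hKα : 2*s - α ≤ (2*(K:ℝ)+1) * α := by
      have h4 : s / α < (K:ℝ) + 1 := Nat.lt_floor_add_one (s / α)
      rw [div_lt_iff₀ hα0] at h4
      have h5 : (2*(K:ℝ)+1)*α = 2*(((K:ℝ)+1)*α) - α := by ring
      linarith
    have hM0 : (0:ℝ) ≤ (M:ℝ) := Nat.cast_nonneg _
    have hT2M : (T2.card : ℝ) ≤ (M:ℝ) := by exact_mod_cast hT2card
    rw [le_div_iff₀ hden]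
    calc (T2.card : ℝ) * (2*s - α) ≤ (M:ℝ) * (2*s - α) :=
          mul_le_mul_of_nonneg_right hT2M (by linarith)
      _ ≤ (M:ℝ) * ((2*(K:ℝ)+1) * α) := mul_le_mul_of_nonneg_left hKα hM0
      _ = ((M:ℝ) * (2*(K:ℝ)+1)) * α := by ring
      _ ≤ (2*(n:ℝ) - 1) * α := mul_le_mul_of_nonneg_right hMK (by linarith)
  -- bound (K-1)H
  have hKH : ((K:ℝ)-1) * H ≤ (s/α) * (Real.log s + 3/5) := by
    have hlogs0 : (0:ℝ) ≤ Real.log s := Real.log_nonneg (by linarith)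
    have hKα2 : (K:ℝ) * α ≤ s := (le_div_iff₀ hα0).1 hKle
    by_cases hHs : H ≤ Real.log s + 3/5
    · apply mul_le_mul ?_ hHs hH0 (by positivity)
      have : (K:ℝ) ≤ s/α := hKle
      linarith
    · push_neg at hHs
      rw [show (s/α) * (Real.log s + 3/5) = (s * (Real.log s + 3/5))/α from by ring]
      rw [le_div_iff₀ hα0]
      have hHle := rho_harmonic_le E hE1
      have hlog32 := rho_log_three_halves
      have hEpos : (0:ℝ) < (E:ℝ) + 1/2 := by positivity
      have hlogE : Real.log ((E:ℝ)+1/2) - Real.log s ≤ ((E:ℝ) + 1/2 - s)/s := by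
        have h1 : Real.log (((E:ℝ)+1/2)/s) ≤ ((E:ℝ)+1/2)/s - 1 :=
          Real.log_le_sub_one_of_pos (by positivity)
        rw [Real.log_div (ne_of_gt hEpos) (by linarith)] at h1
        have h2 : ((E:ℝ)+1/2)/s - 1 = ((E:ℝ)+1/2-s)/s := by field_simp
        linarith [h2 ▸ h1]
      have ht : H - Real.log s - 3/5 ≤ ((E:ℝ)+1/2-s)/s := by
        rw [← hHdef] at hHle
        linarith
      have hst : s * (H - Real.log s - 3/5) ≤ (E:ℝ) + 1/2 - s := by
        have h5 := mul_le_mul_of_nonneg_left ht (by linarith : (0:ℝ) ≤ s)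
        rw [mul_div_cancel₀ _ (by linarith : s ≠ 0)] at h5
        linarith
      have hhalf : (E:ℝ) + 1/2 - s ≤ 1/2 := by linarith
      have hαH : (1:ℝ)/2 ≤ α * H := by nlinarith
      have hKm : ((K:ℝ)-1) * α ≤ s - α := by nlinarith
      have h6 : (((K:ℝ)-1) * H) * α = (((K:ℝ)-1) * α) * H := by ring
      rw [h6]
      have h7 : (((K:ℝ)-1)*α) * H ≤ (s-α) * H := mul_le_mul_of_nonneg_right hKm hH0
      nlinarith [h7, hst, hhalf, hαH]
  -- final assembly
  have hTR : (T.card : ℝ) ≤ (T1.card:ℝ) + (T2.card:ℝ) := by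
    rw [← hsplit]; push_cast; linarith
  have hlogn : Real.log (n:ℝ) = 2 * Real.log s := by
    rw [hs, Real.log_sqrt (by linarith)]; ring
  have hRHS : 2*(s/α)*(Real.log s + 3/5) + 2*s + (2*(n:ℝ)-1)*α/(2*s-α)
      = (1 / α) * s * Real.log (n:ℝ) + 2 * (1 + 0.6 / α) * s +
        (2 * (n : ℝ) - 1) * α / (2 * s - α) := by
    rw [hlogn]
    have h06 : (0.6:ℝ) = 3/5 := by norm_num
    rw [h06]
    field_simp
    ring
  calc (T.card:ℝ) ≤ (T1.card:ℝ) + (T2.card:ℝ) := hTR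
    _ ≤ 2*(((K:ℝ)-1)*H + (E:ℝ)) + (2*(n:ℝ)-1)*α/(2*s-α) := by linarith
    _ < 2*(s/α)*(Real.log s + 3/5) + 2*s + (2*(n:ℝ)-1)*α/(2*s-α) := by linarith
    _ = _ := hRHS
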